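/- Let λ be a partition of 2n in which every odd part has even multiplicity (a type C partition). Then the following are equivalent: (i) the transpose λ^t is again a type C partition, i.e. every odd part of λ^t has even multiplicity; (ii) for every odd part e of λ, the number of parts of λ strictly greater than e is even; (iii) padding the weakly decreasing list of parts with one zero at the end if necessary so that its length is odd, and writing it as r_{2k+1} ≥ r_{2k} ≥ ⋯ ≥ r_1, the odd parts occur precisely in consecutive equal pairs of the form r_{2l−1} = r_{2l−2}. (These equivalent conditions characterize the special nilpotent orbits of Sp(2n,ℂ).) -/

import Mathlib

/-- `l` is a partition of `N`: a weakly decreasing list of positive integers with sum `N`. -/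
def IsPartitionOf (N : ℕ) (l : List ℕ) : Prop :=
  l.Pairwise (· ≥ ·) ∧ (∀ x ∈ l, 0 < x) ∧ l.sum = N

/-- the `j`-th column length `c_j(λ) = #{i : λ_i ≥ j}`. -/
def colLen (l : List ℕ) (j : ℕ) : ℕ := l.countP (fun x => decide (j ≤ x))

/-- the transpose partition, as the list `c_1 ≥ c_2 ≥ ⋯ ≥ c_{λ_1}` of column lengths. -/
def transposeList (l : List ℕ) : List ℕ :=
  (List.range (l.foldr max 0)).map (fun j => colLen l (j + 1))

/-- pad a list with one zero at the end if necessary so that its length is odd. -/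
def padToOdd (c : List ℕ) : List ℕ := if Odd c.length then c else c ++ [0]

section Helpers

lemma getD_mem' {l : List ℕ} {i : ℕ} (hi : i < l.length) : l.getD i 0 ∈ l := by
  rw [List.getD_eq_getElem l 0 hi]; exact List.getElem_mem hi

lemma cnt_iff (l : List ℕ) (hs : l.Pairwise (· ≥ ·)) (p : ℕ → Bool)
    (hp : ∀ x y, x ≤ y → p x = true → p y = true) :
    ∀ i, i < l.length → (p (l.getD i 0) = true ↔ i < l.countP p) := by
  induction l with
  | nil => simp
  | cons a t ih =>
    rw [List.pairwise_cons] at hs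
    obtain ⟨ha, ht⟩ := hs
    intro i hi
    have hz : ¬ p a = true → t.countP p = 0 := fun hpa =>
      List.countP_eq_zero.mpr (fun b hb hpb => hpa (hp b a (ha b hb) hpb))
    rcases i with _ | i
    · simp only [List.getD_cons_zero]
      constructor
      · intro h; rw [List.countP_cons, if_pos h]; omega
      · intro h
        by_contra hpa
        rw [List.countP_cons, hz hpa, if_neg hpa] at h; omega
    · simp only [List.getD_cons_succ]
      by_cases hpa : p a = true
      · rw [List.countP_cons, if_pos hpa, ih ht i (by simpa using hi)]
        omega
      · rw [List.countP_cons, hz hpa, if_neg hpa]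
        constructor
        · intro h; exact absurd (hp _ a (ha _ (getD_mem' (by simpa using hi))) h) hpa
        · omega

lemma cntGE_split (l : List ℕ) (v : ℕ) :
    l.countP (fun x => decide (v ≤ x)) =
      l.countP (fun x => decide (v < x)) + l.count v := by
  induction l with
  | nil => simp
  | cons a t ih =>
    rw [List.countP_cons, List.countP_cons, List.count_cons, ih]
    rcases Nat.lt_trichotomy v a with h | h | h
    · have h1 : v ≤ a := Nat.le_of_lt h
      have h2 : a ≠ v := by omega
      simp [h, h1, h2]; omega
    · subst h
      simp [Nat.lt_irrefl]; omega
    · have h1 : ¬ v ≤ a := by omega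
      have h2 : ¬ v < a := by omega
      have h3 : a ≠ v := by omega
      simp [h1, h2, h3]

lemma countP_split {α : Type*} (L : List α) (p q : α → Bool)
    (h : ∀ x ∈ L, q x = true → p x = true) :
    L.countP p = L.countP q + L.countP (fun x => p x && !q x) := by
  induction L with
  | nil => simp
  | cons a t ih =>
    simp only [List.countP_cons]
    rw [ih (fun x hx => h x (List.mem_cons_of_mem a hx))]
    by_cases hq : q a = true
    · simp [hq, h a List.mem_cons_self hq]; omega
    · simp [hq]; by_cases hp : p a = true <;> simp [hp] <;> omega

lemma range_countP_lt (m M : ℕ) :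
    (List.range M).countP (fun j => decide (j < m)) = min m M := by
  induction M with
  | zero => simp
  | succ M ih =>
    rw [List.range_succ, List.countP_append, ih]
    by_cases h : M < m <;> simp [h] <;> omega

lemma le_foldr_max (l : List ℕ) : ∀ x ∈ l, x ≤ l.foldr max 0 := by
  induction l with
  | nil => simp
  | cons a t ih =>
    intro x hx
    rcases List.mem_cons.mp hx with rfl | hx
    · exact le_max_left _ _
    · exact le_trans (ih x hx) (le_max_right _ _)

lemma getD_anti (l : List ℕ) (hs : l.Pairwise (· ≥ ·)) {i j : ℕ} (hij : i ≤ j) :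
    l.getD j 0 ≤ l.getD i 0 := by
  by_cases hj : j < l.length
  · have hi : i < l.length := lt_of_le_of_lt hij hj
    rw [List.getD_eq_getElem l 0 hi, List.getD_eq_getElem l 0 hj]
    rcases eq_or_lt_of_le hij with rfl | hlt
    · exact le_refl _
    · exact List.pairwise_iff_get.mp hs ⟨i, hi⟩ ⟨j, hj⟩ hlt
  · rw [List.getD_eq_default l 0 (Nat.le_of_not_lt hj)]; exact Nat.zero_le _

lemma colLen_ge_iff (l : List ℕ) (hs : l.Pairwise (· ≥ ·)) (e j : ℕ) (he : 1 ≤ e) :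
    e ≤ colLen l (j + 1) ↔ j < l.getD (e - 1) 0 := by
  by_cases hlen : e - 1 < l.length
  · have h := cnt_iff l hs (fun x => decide (j + 1 ≤ x)) (by intro x y hxy hx; simp at *; omega)
      (e - 1) hlen
    simp only [decide_eq_true_eq] at h
    unfold colLen
    omega
  · have h1 : colLen l (j + 1) ≤ l.length := List.countP_le_length
    rw [List.getD_eq_default l 0 (Nat.le_of_not_lt hlen)]
    unfold colLen at h1 ⊢
    omega

lemma transpose_count (l : List ℕ) (hs : l.Pairwise (· ≥ ·)) (e : ℕ) (he : 1 ≤ e) :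
    (transposeList l).count e = l.getD (e - 1) 0 - l.getD e 0 := by
  set M := l.foldr max 0 with hM
  have key : ∀ f : ℕ, 1 ≤ f →
      (List.range M).countP (fun j => decide (f ≤ colLen l (j + 1))) = min (l.getD (f-1) 0) M := by
    intro f hf
    rw [← range_countP_lt (l.getD (f-1) 0) M]
    apply List.countP_congr
    intro j _
    simp only [decide_eq_true_eq, decide_eq_decide]
    exact colLen_ge_iff l hs f j hf
  have hle : ∀ i, l.getD i 0 ≤ M := by
    intro i
    by_cases hi : i < l.length
    · exact le_foldr_max l _ (getD_mem' hi)
    · rw [List.getD_eq_default l 0 (Nat.le_of_not_lt hi)]; exact Nat.zero_le _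
  have hsplit := countP_split (List.range M) (fun j => decide (e ≤ colLen l (j + 1)))
      (fun j => decide (e + 1 ≤ colLen l (j + 1))) (by intro x _; simp; omega)
  have hc : (transposeList l).count e
      = (List.range M).countP
          (fun j => decide (e ≤ colLen l (j+1)) && !decide (e+1 ≤ colLen l (j+1))) := by
    unfold transposeList
    rw [List.count, List.countP_map]
    apply List.countP_congr
    intro j _
    simp only [Function.comp_apply, beq_iff_eq, Bool.and_eq_true, Bool.not_eq_true',
      decide_eq_true_eq, decide_eq_false_iff_not]
    omega
  have h1 := key e he
  have h2 := key (e+1) (by omega)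
  simp only [Nat.add_sub_cancel] at h2
  have ha := hle (e-1)
  have hb := hle e
  have hanti := getD_anti l hs (show e - 1 ≤ e by omega)
  beta_reduce at hsplit
  rw [h1, h2, min_eq_left ha, min_eq_left hb] at hsplit
  rw [hc]
  omega

lemma pad_getD (l : List ℕ) (i : ℕ) : (padToOdd l).getD i 0 = l.getD i 0 := by
  have hsingle : ∀ k, [0].getD k 0 = 0 := by intro k; cases k <;> rfl
  unfold padToOdd
  split
  · rfl
  · by_cases h : i < l.length
    · exact List.getD_append l [0] 0 i h
    · rw [List.getD_eq_default l 0 (by omega), List.getD_append_right l [0] 0 i (by omega),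
        hsingle]

lemma pad_len_odd (l : List ℕ) : (padToOdd l).length % 2 = 1 := by
  unfold padToOdd
  split
  · rename_i h; exact Nat.odd_iff.mp h
  · rename_i h
    rw [Nat.odd_iff] at h
    simp only [List.length_append, List.length_singleton]
    omega

lemma pad_len (l : List ℕ) :
    l.length ≤ (padToOdd l).length ∧ (padToOdd l).length ≤ l.length + 1 := by
  unfold padToOdd
  split <;> simp

lemma pad_rev (l : List ℕ) (p : ℕ) (h1 : 1 ≤ p) (h2 : p ≤ (padToOdd l).length) :
    (padToOdd l).reverse.getD (p-1) 0 = l.getD ((padToOdd l).length - p) 0 := by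
  have hlen : p - 1 < (padToOdd l).reverse.length := by
    rw [List.length_reverse]; omega
  rw [List.getD_eq_getElem _ 0 hlen, List.getElem_reverse]
  have hlt : (padToOdd l).length - 1 - (p - 1) < (padToOdd l).length := by
    rw [List.length_reverse] at hlen; omega
  rw [← List.getD_eq_getElem _ 0 hlt, show (padToOdd l).length - 1 - (p - 1)
      = (padToOdd l).length - p by omega, pad_getD]

end Helpers

/-- For a type C partition `l` of `2n` (every odd part has even multiplicity),
the following are equivalent:
(i) the transpose is again of type C;
(ii) for every odd part `e`, the number of parts strictly greater than `e` is even;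
(iii) padding the list of parts with a zero to odd length and writing it as
`r_{2k+1} ≥ r_{2k} ≥ ⋯ ≥ r_1` (so `r_p = (padToOdd l).reverse.getD (p-1) 0`),
the odd parts occur precisely in consecutive equal pairs `r_{2l-1} = r_{2l-2}`
(an odd entry at an odd position `p` forces `p ≥ 3` and equality with the entry
one position below; an odd entry at an even position equals the entry one position above). -/
theorem typeC_special_characterizations (n : ℕ) (l : List ℕ)
    (hpart : IsPartitionOf (2 * n) l)
    (hC : ∀ e ∈ l, Odd e → Even (l.count e)) :
    List.TFAE
      [∀ e ∈ transposeList l, Odd e → Even ((transposeList l).count e),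
       ∀ e ∈ l, Odd e → Even (l.countP (fun x => decide (e < x))),
       ∀ p, 1 ≤ p → p ≤ (padToOdd l).length →
         Odd ((padToOdd l).reverse.getD (p - 1) 0) →
         (Odd p → 3 ≤ p ∧
            (padToOdd l).reverse.getD (p - 2) 0 = (padToOdd l).reverse.getD (p - 1) 0) ∧
         (Even p → p + 1 ≤ (padToOdd l).length ∧
            (padToOdd l).reverse.getD p 0 = (padToOdd l).reverse.getD (p - 1) 0)] := by
  obtain ⟨hs, hposl, -⟩ := hpart
  -- basic toolkit
  have hGT : ∀ v : ℕ, ∀ i, i < l.length →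
      (v < l.getD i 0 ↔ i < l.countP (fun x => decide (v < x))) := by
    intro v i hi
    have := cnt_iff l hs (fun x => decide (v < x)) (by intro x y hxy hx; simp at *; omega) i hi
    simpa using this
  have hGE : ∀ v : ℕ, ∀ i, i < l.length →
      (v ≤ l.getD i 0 ↔ i < l.countP (fun x => decide (v ≤ x))) := by
    intro v i hi
    have := cnt_iff l hs (fun x => decide (v ≤ x)) (by intro x y hxy hx; simp at *; omega) i hi
    simpa using this
  have hGTlen : ∀ v : ℕ, l.countP (fun x => decide (v < x)) ≤ l.length :=
    fun v => List.countP_le_length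
  have hGElen : ∀ v : ℕ, l.countP (fun x => decide (v ≤ x)) ≤ l.length :=
    fun v => List.countP_le_length
  have hsplitGE := cntGE_split l
  have hanti : ∀ {i j : ℕ}, i ≤ j → l.getD j 0 ≤ l.getD i 0 := fun h => getD_anti l hs h
  have hposlen : ∀ i : ℕ, 0 < l.getD i 0 → i < l.length := by
    intro i h
    by_contra hcon
    rw [List.getD_eq_default l 0 (by omega)] at h
    omega
  -- the intermediate parity condition
  set P1 : Prop := ∀ k : ℕ, l.getD (2*k) 0 % 2 = l.getD (2*k+1) 0 % 2 with hP1def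
  -- (1) ↔ P1
  have h1P1 : (∀ e ∈ transposeList l, Odd e → Even ((transposeList l).count e)) ↔ P1 := by
    constructor
    · intro h1 k
      have hkey : Even ((transposeList l).count (2*k+1)) := by
        by_cases hmem : (2*k+1) ∈ transposeList l
        · exact h1 _ hmem ⟨k, by ring⟩
        · rw [List.count_eq_zero_of_not_mem hmem]; exact Even.zero
      rw [transpose_count l hs (2*k+1) (by omega)] at hkey
      have hba := hanti (show 2*k+1-1 ≤ 2*k+1 by omega)
      have h2 := (Nat.even_sub hba).mp hkey
      rw [Nat.even_iff, Nat.even_iff] at h2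
      rw [show (2*k+1)-1 = 2*k by omega] at h2
      omega
    · intro hp e hmem hodd
      obtain ⟨k, rfl⟩ := hodd
      rw [transpose_count l hs (2*k+1) (by omega)]
      have hba := hanti (show 2*k+1-1 ≤ 2*k+1 by omega)
      rw [Nat.even_sub hba, Nat.even_iff, Nat.even_iff,
        show (2*k+1)-1 = 2*k by omega]
      have := hp k
      omega
  -- (2) → P1
  have h2P1 : (∀ e ∈ l, Odd e → Even (l.countP (fun x => decide (e < x)))) → P1 := by
    intro h2 k
    by_contra hne
    have hba : l.getD (2*k+1) 0 ≤ l.getD (2*k) 0 := hanti (by omega)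
    rcases Nat.lt_or_ge (l.getD (2*k+1) 0 % 2) 1 with hb1 | hb1
    · -- b even, a odd
      have ha1 : l.getD (2*k) 0 % 2 = 1 := by omega
      set a := l.getD (2*k) 0 with hadef
      have hapos : 0 < a := by omega
      have hklen : 2*k < l.length := hposlen _ hapos
      have hamem : a ∈ l := getD_mem' hklen
      have hin : 2*k < l.countP (fun x => decide (a ≤ x)) := (hGE a (2*k) hklen).mp le_rfl
      have hout : l.countP (fun x => decide (a ≤ x)) ≤ 2*k+1 := by
        by_cases hl : 2*k+1 < l.length
        · by_contra hcon
          have := (hGE a (2*k+1) hl).mpr (by omega)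
          omega
        · have := hGElen a; omega
      have hEvGT := h2 a hamem (Nat.odd_iff.mpr ha1)
      have hEvC := hC a hamem (Nat.odd_iff.mpr ha1)
      rw [Nat.even_iff] at hEvGT hEvC
      have := hsplitGE a
      omega
    · -- b odd
      have hb1' : l.getD (2*k+1) 0 % 2 = 1 := by omega
      set b := l.getD (2*k+1) 0 with hbdef
      have hbpos : 0 < b := by omega
      have hklen : 2*k+1 < l.length := hposlen _ hbpos
      have hbmem : b ∈ l := getD_mem' hklen
      have hab : b < l.getD (2*k) 0 := by omega
      have hin : 2*k < l.countP (fun x => decide (b < x)) :=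
        (hGT b (2*k) (by omega)).mp hab
      have hout : ¬ (2*k+1 < l.countP (fun x => decide (b < x))) := by
        intro hcon
        have := (hGT b (2*k+1) hklen).mpr hcon
        omega
      have hEvGT := h2 b hbmem (Nat.odd_iff.mpr hb1')
      rw [Nat.even_iff] at hEvGT
      omega
  -- P1 → (2)
  have hP12 : P1 → (∀ e ∈ l, Odd e → Even (l.countP (fun x => decide (e < x)))) := by
    intro hp
    have key : ∀ a : ℕ, ∀ v ∈ l, Odd v → l.countP (fun x => decide (v < x)) = a → Even a := by
      intro a
      induction a using Nat.strong_induction_on with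
      | _ a IH =>
        intro v hv hvodd hva
        by_contra haodd
        have ha1 : a % 2 = 1 := Nat.not_even_iff.mp haodd
        have hcount : 0 < l.count v := List.count_pos_iff.mpr hv
        have hGEv := hsplitGE v
        have haGE : a < l.countP (fun x => decide (v ≤ x)) := by omega
        have halen : a < l.length := lt_of_lt_of_le haGE (hGElen v)
        have hgav : l.getD a 0 = v := by
          have hle : l.getD a 0 ≤ v := by
            by_contra hcon
            have := (hGT v a halen).mp (by omega)
            omega
          have hge : v ≤ l.getD a 0 := (hGE v a halen).mpr haGE
          omega
        have hwlen : a - 1 < l.length := by omega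
        have hw_gt : v < l.getD (a-1) 0 := (hGT v (a-1) hwlen).mpr (by omega)
        have hp1 := hp ((a-1)/2)
        rw [show 2*((a-1)/2) = a - 1 by omega, show (a-1)+1 = a by omega] at hp1
        have hvodd' : v % 2 = 1 := Nat.odd_iff.mp hvodd
        have hwodd : l.getD (a-1) 0 % 2 = 1 := by rw [hgav] at hp1; omega
        have hwmem : l.getD (a-1) 0 ∈ l := getD_mem' hwlen
        set w := l.getD (a-1) 0 with hwdef
        have hin : a - 1 < l.countP (fun x => decide (w ≤ x)) := (hGE w (a-1) hwlen).mp le_rfl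
        have hout : ¬ (a < l.countP (fun x => decide (w ≤ x))) := by
          intro hcon
          have := (hGE w a halen).mpr hcon
          omega
        have hsw := hsplitGE w
        have hcw := hC w hwmem (Nat.odd_iff.mpr hwodd)
        have hcntw : 0 < l.count w := List.count_pos_iff.mpr hwmem
        have hlt : l.countP (fun x => decide (w < x)) < a := by omega
        have hIH := IH _ hlt w hwmem (Nat.odd_iff.mpr hwodd) rfl
        rw [Nat.even_iff] at hIH hcw
        omega
    intro v hv hvodd
    exact key _ v hv hvodd rfl
  -- abbreviations for condition (3)
  have hm'odd := pad_len_odd l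
  obtain ⟨hm'ge, hm'le⟩ := pad_len l
  -- (2) → (3)
  have h23 : (∀ e ∈ l, Odd e → Even (l.countP (fun x => decide (e < x)))) →
      (∀ p, 1 ≤ p → p ≤ (padToOdd l).length →
         Odd ((padToOdd l).reverse.getD (p - 1) 0) →
         (Odd p → 3 ≤ p ∧
            (padToOdd l).reverse.getD (p - 2) 0 = (padToOdd l).reverse.getD (p - 1) 0) ∧
         (Even p → p + 1 ≤ (padToOdd l).length ∧
            (padToOdd l).reverse.getD p 0 = (padToOdd l).reverse.getD (p - 1) 0)) := by
    intro h2 p hp1 hpm hodd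
    set m' := (padToOdd l).length with hm'def
    rw [pad_rev l p hp1 hpm] at hodd
    set i := m' - p with hidef
    set v := l.getD i 0 with hvdef
    have hv1 : v % 2 = 1 := Nat.odd_iff.mp hodd
    have hilen : i < l.length := hposlen i (by omega)
    have hvmem : v ∈ l := getD_mem' hilen
    have hvodd : Odd v := hodd
    have hEa := h2 v hvmem hvodd
    have hEc := hC v hvmem hvodd
    rw [Nat.even_iff] at hEa hEc
    have hcnt : 0 < l.count v := List.count_pos_iff.mpr hvmem
    have hGEv := hsplitGE v
    have hblock_lo : ¬ (i < l.countP (fun x => decide (v < x))) := by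
      intro hcon
      have := (hGT v i hilen).mpr hcon
      omega
    have hblock_hi : i < l.countP (fun x => decide (v ≤ x)) := (hGE v i hilen).mp le_rfl
    constructor
    · -- p odd, so i even
      intro hpodd
      have hp1' : p % 2 = 1 := Nat.odd_iff.mp hpodd
      have hieven : i % 2 = 0 := by omega
      have hi1 : i + 1 < l.countP (fun x => decide (v ≤ x)) := by omega
      have hi1len : i + 1 < l.length := lt_of_lt_of_le hi1 (hGElen v)
      have hgi1 : l.getD (i+1) 0 = v := by
        have h1 := hanti (show i ≤ i + 1 by omega)
        have h2' := (hGE v (i+1) hi1len).mpr hi1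
        omega
      have h3p : 3 ≤ p := by omega
      refine ⟨h3p, ?_⟩
      have hr := pad_rev l (p-1) (by omega) (by omega)
      rw [show p-1-1 = p-2 by omega] at hr
      rw [hr, pad_rev l p hp1 hpm, show m' - (p-1) = i + 1 by omega]
      exact hgi1
    · -- p even, so i odd
      intro hpeven
      have hp0 : p % 2 = 0 := Nat.even_iff.mp hpeven
      have hiodd : i % 2 = 1 := by omega
      have him : i - 1 < l.length := by omega
      have hgim : l.getD (i-1) 0 = v := by
        have h1 := hanti (show i - 1 ≤ i by omega)
        have h2' : l.getD (i-1) 0 ≤ v := by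
          by_contra hcon
          have := (hGT v (i-1) him).mp (by omega)
          omega
        omega
      refine ⟨by omega, ?_⟩
      have hr := pad_rev l (p+1) (by omega) (by omega)
      rw [show p+1-1 = p by omega] at hr
      rw [hr, pad_rev l p hp1 hpm, show m' - (p+1) = i - 1 by omega]
      exact hgim
  -- (3) → (2)
  have h32 : (∀ p, 1 ≤ p → p ≤ (padToOdd l).length →
         Odd ((padToOdd l).reverse.getD (p - 1) 0) →
         (Odd p → 3 ≤ p ∧
            (padToOdd l).reverse.getD (p - 2) 0 = (padToOdd l).reverse.getD (p - 1) 0) ∧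
         (Even p → p + 1 ≤ (padToOdd l).length ∧
            (padToOdd l).reverse.getD p 0 = (padToOdd l).reverse.getD (p - 1) 0)) →
      (∀ e ∈ l, Odd e → Even (l.countP (fun x => decide (e < x)))) := by
    intro h3 v hv hvodd
    by_contra haodd
    set a := l.countP (fun x => decide (v < x)) with hadef
    have ha1 : a % 2 = 1 := Nat.not_even_iff.mp haodd
    have hv1 : v % 2 = 1 := Nat.odd_iff.mp hvodd
    have hcount : 0 < l.count v := List.count_pos_iff.mpr hv
    have hGEv := hsplitGE v
    have haGE : a < l.countP (fun x => decide (v ≤ x)) := by omega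
    have halen : a < l.length := lt_of_lt_of_le haGE (hGElen v)
    have hgav : l.getD a 0 = v := by
      have hle : l.getD a 0 ≤ v := by
        by_contra hcon
        have := (hGT v a halen).mp (by omega)
        omega
      have hge : v ≤ l.getD a 0 := (hGE v a halen).mpr haGE
      omega
    set m' := (padToOdd l).length with hm'def
    set p := m' - a with hpdef
    have hplow : 1 ≤ p := by omega
    have hphigh : p ≤ m' := by omega
    have hrev := pad_rev l p hplow hphigh
    rw [show m' - p = a by omega, hgav] at hrev
    have happ := h3 p hplow hphigh (by rw [hrev]; exact hvodd)
    have hpeven : Even p := Nat.even_iff.mpr (by omega)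
    obtain ⟨hple, heq⟩ := happ.2 hpeven
    have hrev2 := pad_rev l (p+1) (by omega) (by omega)
    rw [show p+1-1 = p by omega] at hrev2
    rw [hrev2, hrev, show m' - (p+1) = a - 1 by omega] at heq
    have := (hGT v (a-1) (by omega)).mpr (by omega)
    omega
  tfae_have 1 ↔ 2 := h1P1.trans ⟨hP12, h2P1⟩
  tfae_have 2 → 3 := h23
  tfae_have 3 → 2 := h32
  tfae_finish
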